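/- Let Ω and n be finite types, let p : Ω → ℝ be nonnegative with ∑_ω p ω = 1, and let Z : Ω → Matrix n n ℂ be such that Z ω is Hermitian for every ω. Then ∑_{ω} (p ω) · ‖Z ω‖₁ ≤ Re Tr √( ∑_{ω} (p ω) • (Z ω * Z ω) ), where ∑_ω (p ω) • (Z ω * Z ω) is positive semidefinite and √ is its positive semidefinite square root. -/

import Mathlib

open Matrix
open scoped ComplexOrder

/-- Positive semidefinite square root, extended to a total function
(it agrees with `Matrix.PosSemidef.sqrt` on positive semidefinite matrices). -/
noncomputable def psqrt {n : Type*} [Fintype n] [DecidableEq n] (A : Matrix n n ℂ) :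
    Matrix n n ℂ :=
  open scoped Classical in
  if h : A.PosSemidef then
    (h.1.eigenvectorUnitary : Matrix n n ℂ) *
      diagonal (((↑) : ℝ → ℂ) ∘ (√·) ∘ h.1.eigenvalues) *
      (star h.1.eigenvectorUnitary : Matrix n n ℂ)
  else 0

/-- The trace norm ‖A‖₁ = Re Tr √(AᴴA). -/
noncomputable def traceNorm {n : Type*} [Fintype n] [DecidableEq n] (A : Matrix n n ℂ) : ℝ :=
  (psqrt (Aᴴ * A)).trace.re

noncomputable def Matrix.PosSemidef.sqrt {n : Type*} [Fintype n] [DecidableEq n] {A : Matrix n n ℂ}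
    (h : A.PosSemidef) : Matrix n n ℂ :=
  (h.1.eigenvectorUnitary : Matrix n n ℂ) *
      diagonal (((↑) : ℝ → ℂ) ∘ (√·) ∘ h.1.eigenvalues) *
      (star h.1.eigenvectorUnitary : Matrix n n ℂ)

open scoped MatrixOrder in
lemma Matrix.PosSemidef.sqrt_eq_cfc' {n : Type*} [Fintype n] [DecidableEq n] {A : Matrix n n ℂ}
    (hA : A.PosSemidef) : hA.sqrt = CFC.sqrt A := by
  rw [CFC.sqrt_eq_cfc, cfc_nnreal_eq_real _ A, hA.1.cfc_eq]
  simp only [IsHermitian.cfc, Matrix.PosSemidef.sqrt]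
  congr 3
  funext i
  simp [Real.coe_sqrt, max_eq_left (hA.eigenvalues_nonneg i)]

open scoped MatrixOrder in
lemma Matrix.PosSemidef.posSemidef_sqrt {n : Type*} [Fintype n] [DecidableEq n] {A : Matrix n n ℂ}
    (hA : A.PosSemidef) : hA.sqrt.PosSemidef := by
  rw [hA.sqrt_eq_cfc']; exact (CFC.sqrt_nonneg A).posSemidef

open scoped MatrixOrder in
lemma Matrix.PosSemidef.sqrt_mul_self {n : Type*} [Fintype n] [DecidableEq n] {A : Matrix n n ℂ}
    (hA : A.PosSemidef) : hA.sqrt * hA.sqrt = A := by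
  rw [hA.sqrt_eq_cfc']; exact CFC.sqrt_mul_sqrt_self A hA.nonneg

open scoped MatrixOrder in
lemma Matrix.PosSemidef.eq_sqrt_of_sq_eq {n : Type*} [Fintype n] [DecidableEq n] {A B : Matrix n n ℂ}
    (hB : B.PosSemidef) (hA : A.PosSemidef) (h : B ^ 2 = A) : B = hA.sqrt := by
  rw [hA.sqrt_eq_cfc', eq_comm, CFC.sqrt_eq_iff A B hA.nonneg hB.nonneg, ← sq, h]

lemma trace_re_nonneg' {n : Type*} [Fintype n] [DecidableEq n] {M : Matrix n n ℂ}
    (hM : M.PosSemidef) : 0 ≤ M.trace.re := by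
  have h : ∀ i, 0 ≤ (M i i).re := by
    intro i
    have := hM.2 (Finsupp.single i 1)
    have h2 : (0 : ℂ) ≤ M i i := by
      simpa [Matrix.mulVec_single, dotProduct, Pi.single_apply, apply_ite] using this
    exact (Complex.le_def.mp h2).1
  rw [Matrix.trace]
  rw [Complex.re_sum]
  exact Finset.sum_nonneg fun i _ => h i

lemma variational {n : Type*} [Fintype n] [DecidableEq n]
    {T A : Matrix n n ℂ} (hT : T.PosSemidef) (hA : A.PosSemidef)
    (hdet : IsUnit A.det) :
    2 * T.trace.re ≤ (A⁻¹ * (T * T)).trace.re + A.trace.re := by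
  set C := hA.sqrt with hCdef
  have hC : C.PosSemidef := hA.posSemidef_sqrt
  have hCC : C * C = A := hA.sqrt_mul_self
  have hdetC : IsUnit C.det := by
    have : C.det * C.det = A.det := by rw [← Matrix.det_mul, hCC]
    rcases isUnit_iff_ne_zero.mp hdet with h
    exact isUnit_iff_ne_zero.mpr (fun h0 => by simp [h0] at this; exact (isUnit_iff_ne_zero.mp hdet) this.symm)
  have hCinv : C * C⁻¹ = 1 := Matrix.mul_nonsing_inv _ hdetC
  have hinvC : C⁻¹ * C = 1 := Matrix.nonsing_inv_mul _ hdetC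
  have hCH : Cᴴ = C := hC.1
  have hCiH : (C⁻¹)ᴴ = C⁻¹ := by rw [Matrix.conjTranspose_nonsing_inv, hCH]
  set M := C⁻¹ * T - C with hMdef
  have hMH : Mᴴ = T * C⁻¹ - C := by
    rw [hMdef, Matrix.conjTranspose_sub, Matrix.conjTranspose_mul, hT.1, hCiH, hCH]
  have hpsd : (M * Mᴴ).PosSemidef := Matrix.posSemidef_self_mul_conjTranspose M
  have h0 : 0 ≤ (M * Mᴴ).trace.re := trace_re_nonneg' hpsd
  have hexp : M * Mᴴ = C⁻¹ * (T * T) * C⁻¹ - C⁻¹ * T * C - C * (T * C⁻¹) + C * C := by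
    rw [hMdef, hMH]
    noncomm_ring
  have htr : (M * Mᴴ).trace = (A⁻¹ * (T * T)).trace + A.trace - 2 * T.trace := by
    rw [hexp, Matrix.trace_add, Matrix.trace_sub, Matrix.trace_sub]
    have e1 : (C⁻¹ * (T * T) * C⁻¹).trace = (A⁻¹ * (T * T)).trace := by
      rw [Matrix.trace_mul_cycle, ← Matrix.mul_assoc, ← Matrix.mul_inv_rev, hCC, Matrix.mul_assoc]
    have e2 : (C⁻¹ * T * C).trace = T.trace := by
      rw [Matrix.trace_mul_cycle, hCinv, Matrix.one_mul]
    have e3 : (C * (T * C⁻¹)).trace = T.trace := by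
      rw [← Matrix.mul_assoc, Matrix.trace_mul_cycle, hinvC, Matrix.one_mul]
    rw [e1, e2, e3, hCC]
    ring
  have := h0
  rw [htr] at this
  rw [two_mul] at this
  simp only [Complex.sub_re, Complex.add_re] at this
  rw [two_mul]
  linarith

lemma psqrt_eq {n : Type*} [Fintype n] [DecidableEq n] {A : Matrix n n ℂ}
    (hA : A.PosSemidef) : psqrt A = hA.sqrt := dif_pos hA

lemma trace_psqrt {n : Type*} [Fintype n] [DecidableEq n] {A : Matrix n n ℂ}
    (hA : A.PosSemidef) :
    (psqrt A).trace = ∑ i, (Real.sqrt (hA.1.eigenvalues i) : ℂ) := by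
  rw [psqrt_eq hA, Matrix.PosSemidef.sqrt, Matrix.trace_mul_cycle]
  rw [show (star hA.1.eigenvectorUnitary : Matrix n n ℂ) * hA.1.eigenvectorUnitary.1 = 1 from
    Matrix.UnitaryGroup.star_mul_self _]
  rw [Matrix.one_mul, Matrix.trace_diagonal]
  rfl

lemma real_sqrt_add_le (a b : ℝ) (ha : 0 ≤ a) (hb : 0 ≤ b) :
    Real.sqrt (a + b) ≤ Real.sqrt a + Real.sqrt b := by
  calc Real.sqrt (a + b) ≤ Real.sqrt ((Real.sqrt a + Real.sqrt b) ^ 2) :=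
        Real.sqrt_le_sqrt (by nlinarith [Real.sq_sqrt ha, Real.sq_sqrt hb, mul_nonneg (Real.sqrt_nonneg a) (Real.sqrt_nonneg b)])
    _ = Real.sqrt a + Real.sqrt b := Real.sqrt_sq (by positivity)

lemma smul_one_posSemidef {n : Type*} [Fintype n] [DecidableEq n] {ε : ℝ} (hε : 0 ≤ ε) :
    ((ε : ℂ) • (1 : Matrix n n ℂ)).PosSemidef := by
  have : (ε : ℂ) • (1 : Matrix n n ℂ) = Matrix.diagonal (fun _ => (ε : ℂ)) := by
    ext i j
    by_cases h : i = j <;> simp [Matrix.diagonal_apply, Matrix.one_apply, h]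
  rw [this]
  exact Matrix.PosSemidef.diagonal fun i => by
    simpa using Complex.zero_le_real.mpr hε

lemma trace_psqrt_perturb {n : Type*} [Fintype n] [DecidableEq n] {X : Matrix n n ℂ}
    (hX : X.PosSemidef) {ε : ℝ} (hε : 0 ≤ ε) :
    (psqrt (X + (ε : ℂ) • 1)).trace.re ≤
      (psqrt X).trace.re + (Fintype.card n) * Real.sqrt ε := by
  have hXε : (X + (ε : ℂ) • 1).PosSemidef := hX.add (smul_one_posSemidef hε)
  set U : Matrix n n ℂ := hX.1.eigenvectorUnitary.1 with hU
  set lam := hX.1.eigenvalues with hlam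
  set D : Matrix n n ℂ :=
    Matrix.diagonal (fun i => (Real.sqrt (lam i + ε) : ℂ)) with hDdef
  set S : Matrix n n ℂ := U * D * star U with hSdef
  have hUU : star U * U = 1 := Matrix.UnitaryGroup.star_mul_self _
  have hUU' : U * star U = 1 := Matrix.mem_unitaryGroup_iff.mp hX.1.eigenvectorUnitary.2
  have hS : S.PosSemidef := by
    rw [hSdef, Matrix.star_eq_conjTranspose U]
    exact Matrix.PosSemidef.mul_mul_conjTranspose_same
      (Matrix.PosSemidef.diagonal fun i => by
        simpa using Complex.zero_le_real.mpr (Real.sqrt_nonneg _)) U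
  have hDD : D * D = Matrix.diagonal (fun i => ((lam i : ℂ) + (ε : ℂ))) := by
    have hfun : (fun i => (Real.sqrt (lam i + ε) : ℂ) * (Real.sqrt (lam i + ε) : ℂ))
        = fun i => ((lam i : ℂ) + (ε : ℂ)) := funext fun i => by
      rw [← Complex.ofReal_mul, Real.mul_self_sqrt (add_nonneg (hX.eigenvalues_nonneg i) hε)]
      push_cast
      ring
    rw [hDdef, Matrix.diagonal_mul_diagonal, hfun]
  have hS2 : S ^ 2 = X + (ε : ℂ) • 1 := by
    rw [pow_two]
    have e : S * S = U * (D * (star U * U) * D) * star U := by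
      rw [hSdef]; simp only [Matrix.mul_assoc]
    rw [e, hUU, Matrix.mul_one, hDD]
    have hsplit : Matrix.diagonal (fun i => ((lam i : ℂ) + (ε : ℂ)))
        = Matrix.diagonal (fun i => (lam i : ℂ)) + (ε : ℂ) • 1 := by
      ext i j
      by_cases h : i = j <;> simp [Matrix.diagonal_apply, Matrix.one_apply, h]
    rw [hsplit, Matrix.mul_add, Matrix.add_mul]
    refine congrArg₂ (· + ·) ?_ ?_
    · have := hX.1.spectral_theorem
      rw [Unitary.conjStarAlgAut_apply] at this
      rw [hU, hlam]
      exact this.symm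
    · rw [mul_smul_comm, smul_mul_assoc, Matrix.mul_one, hUU']
  have hSsqrt : S = hXε.sqrt := hS.eq_sqrt_of_sq_eq hXε hS2
  have htrS : S.trace = ∑ i, (Real.sqrt (lam i + ε) : ℂ) := by
    rw [hSdef, Matrix.trace_mul_cycle, hUU, Matrix.one_mul, hDdef, Matrix.trace_diagonal]
  have hleft : (psqrt (X + (ε : ℂ) • 1)).trace.re = ∑ i, Real.sqrt (lam i + ε) := by
    rw [psqrt_eq hXε, ← hSsqrt, htrS, Complex.re_sum]
    simp
  have hright : (psqrt X).trace.re = ∑ i, Real.sqrt (lam i) := by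
    rw [trace_psqrt hX, Complex.re_sum]
    simp [hlam]
  rw [hleft, hright]
  calc ∑ i, Real.sqrt (lam i + ε) ≤ ∑ i, (Real.sqrt (lam i) + Real.sqrt ε) :=
        Finset.sum_le_sum fun i _ =>
          real_sqrt_add_le _ _ (hX.eigenvalues_nonneg i) hε
    _ = (∑ i, Real.sqrt (lam i)) + (Fintype.card n) * Real.sqrt ε := by
        rw [Finset.sum_add_distrib, Finset.sum_const, Finset.card_univ, nsmul_eq_mul]

lemma smul_posSemidef' {n : Type*} [Fintype n] [DecidableEq n]
    {M : Matrix n n ℂ} (hM : M.PosSemidef) {r : ℝ} (hr : 0 ≤ r) :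
    (r • M).PosSemidef := by
  constructor
  · show (r • M)ᴴ = r • M
    rw [Matrix.conjTranspose_smul, star_trivial, hM.1]
  · intro x
    exact (hM.smul hr).2 x

lemma smul_one_posDef {n : Type*} [Fintype n] [DecidableEq n] {ε : ℝ} (hε : 0 < ε) :
    ((ε : ℂ) • (1 : Matrix n n ℂ)).PosDef := by
  have : (ε : ℂ) • (1 : Matrix n n ℂ) = Matrix.diagonal (fun _ => (ε : ℂ)) := by
    ext i j
    by_cases h : i = j <;> simp [Matrix.diagonal_apply, Matrix.one_apply, h]
  rw [this]
  exact Matrix.PosDef.diagonal fun i => by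
    simpa using Complex.zero_lt_real.mpr hε

/-- First inequality of eq. (25) in the paper's proof of its Covering Lemma: the
expected trace norm of a finitely supported random Hermitian matrix is at most the trace
of the square root of its expected square; moreover the expected square is positive
semidefinite. -/
theorem expected_trace_norm_le_trace_sqrt_second_moment
    {Ω : Type*} [Fintype Ω]
    {n : Type*} [Fintype n] [DecidableEq n]
    (p : Ω → ℝ) (hp0 : ∀ ω, 0 ≤ p ω) (hp1 : ∑ ω, p ω = 1)
    (Z : Ω → Matrix n n ℂ) (hZ : ∀ ω, (Z ω).IsHermitian) :
    (∑ ω, p ω • (Z ω * Z ω)).PosSemidef ∧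
    ∑ ω, p ω * traceNorm (Z ω) ≤ ((psqrt (∑ ω, p ω • (Z ω * Z ω))).trace).re := by
  have hsq : ∀ ω, (Z ω * Z ω).PosSemidef := fun ω => by
    have := Matrix.posSemidef_conjTranspose_mul_self (Z ω)
    rwa [hZ ω] at this
  set X : Matrix n n ℂ := ∑ ω, p ω • (Z ω * Z ω) with hXdef
  have hX : X.PosSemidef := by
    rw [hXdef]
    refine Finset.sum_induction _ _ (fun a b ha hb => ha.add hb) Matrix.PosSemidef.zero ?_
    exact fun ω _ => smul_posSemidef' (hsq ω) (hp0 ω)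
  refine ⟨hX, ?_⟩
  refine le_of_forall_pos_le_add fun δ hδ => ?_
  set c : ℝ := (Fintype.card n : ℝ) + 1 with hc
  have hcpos : 0 < c := by positivity
  set ε : ℝ := (δ / c) ^ 2 with hε
  have hεpos : 0 < ε := by positivity
  -- the perturbed matrix and its square root
  set Xε : Matrix n n ℂ := X + (ε : ℂ) • 1 with hXε
  have hXεpd : Xε.PosDef := Matrix.PosDef.posSemidef_add hX (smul_one_posDef hεpos)
  have hXεpsd : Xε.PosSemidef := hXεpd.posSemidef
  set A : Matrix n n ℂ := psqrt Xε with hAdef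
  have hAeq : A = hXεpsd.sqrt := psqrt_eq hXεpsd
  have hA : A.PosSemidef := by rw [hAeq]; exact hXεpsd.posSemidef_sqrt
  have hAA : A * A = Xε := by rw [hAeq]; exact hXεpsd.sqrt_mul_self
  have hdetA : IsUnit A.det := by
    have h1 : A.det * A.det = Xε.det := by rw [← Matrix.det_mul, hAA]
    have h2 : Xε.det ≠ 0 := ne_of_gt hXεpd.det_pos
    exact isUnit_iff_ne_zero.mpr fun h0 => h2 (by rw [← h1, h0, mul_zero])
  -- variational bound for each ω
  have hvar : ∀ ω, 2 * traceNorm (Z ω) ≤ (A⁻¹ * (Z ω * Z ω)).trace.re + A.trace.re := by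
    intro ω
    have hQ : ((Z ω)ᴴ * Z ω).PosSemidef := Matrix.posSemidef_conjTranspose_mul_self (Z ω)
    set T : Matrix n n ℂ := psqrt ((Z ω)ᴴ * Z ω) with hTdef
    have hTeq : T = hQ.sqrt := psqrt_eq hQ
    have hT : T.PosSemidef := by rw [hTeq]; exact hQ.posSemidef_sqrt
    have hTT : T * T = Z ω * Z ω := by
      rw [hTeq, hQ.sqrt_mul_self, hZ ω]
    have := variational hT hA hdetA
    rw [hTT] at this
    exact this
  -- summation
  have hsum : ∑ ω, p ω * traceNorm (Z ω) ≤
      ((A⁻¹ * X).trace.re + A.trace.re) / 2 := by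
    have h1 : ∀ ω, p ω * traceNorm (Z ω) ≤
        p ω * (((A⁻¹ * (Z ω * Z ω)).trace.re + A.trace.re) / 2) := fun ω => by
      have := hvar ω
      have h2 : traceNorm (Z ω) ≤ ((A⁻¹ * (Z ω * Z ω)).trace.re + A.trace.re) / 2 := by
        linarith
      exact mul_le_mul_of_nonneg_left h2 (hp0 ω)
    calc ∑ ω, p ω * traceNorm (Z ω)
        ≤ ∑ ω, p ω * (((A⁻¹ * (Z ω * Z ω)).trace.re + A.trace.re) / 2) :=
          Finset.sum_le_sum fun ω _ => h1 ω
      _ = (∑ ω, ((p ω * (A⁻¹ * (Z ω * Z ω)).trace.re) / 2 + (p ω * A.trace.re) / 2)) := by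
          congr 1
          funext ω
          ring
      _ = ((∑ ω, p ω * (A⁻¹ * (Z ω * Z ω)).trace.re) + A.trace.re) / 2 := by
          rw [Finset.sum_add_distrib, ← Finset.sum_div, ← Finset.sum_div, ← Finset.sum_mul,
            hp1, one_mul]
          ring
      _ = ((A⁻¹ * X).trace.re + A.trace.re) / 2 := by
          congr 2
          have hlin : A⁻¹ * X = ∑ ω, p ω • (A⁻¹ * (Z ω * Z ω)) := by
            rw [hXdef, Finset.mul_sum]
            congr 1
            funext ω
            rw [Matrix.mul_smul]
          rw [hlin, Matrix.trace_sum, Complex.re_sum]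
          congr 1
          funext ω
          rw [Matrix.trace_smul]
          simp [Complex.real_smul, Complex.mul_re]
  -- comparison with the perturbed trace
  have hAinv : A⁻¹.PosSemidef := hA.inv
  have e1 : A⁻¹ * Xε = A := by
    rw [← hAA, ← Matrix.mul_assoc, Matrix.nonsing_inv_mul _ hdetA, Matrix.one_mul]
  have e2 : A⁻¹ * Xε = A⁻¹ * X + (ε : ℂ) • A⁻¹ := by
    rw [hXε, Matrix.mul_add, mul_smul_comm, Matrix.mul_one]
  have e3 : (A⁻¹ * Xε).trace.re = (A⁻¹ * X).trace.re + ε * A⁻¹.trace.re := by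
    rw [e2, Matrix.trace_add, Matrix.trace_smul, Complex.add_re]
    congr 1
    simp [Complex.real_smul, Complex.mul_re]
  rw [e1] at e3
  have hAX : (A⁻¹ * X).trace.re ≤ A.trace.re := by
    have h4 : 0 ≤ ε * A⁻¹.trace.re :=
      mul_nonneg hεpos.le (trace_re_nonneg' hAinv)
    linarith
  have hfinal1 : ∑ ω, p ω * traceNorm (Z ω) ≤ A.trace.re := by
    calc ∑ ω, p ω * traceNorm (Z ω) ≤ ((A⁻¹ * X).trace.re + A.trace.re) / 2 := hsum
      _ ≤ (A.trace.re + A.trace.re) / 2 := by linarith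
      _ = A.trace.re := by ring
  have hperturb := trace_psqrt_perturb hX hεpos.le
  have hsqrtε : Real.sqrt ε = δ / c := by
    rw [hε, Real.sqrt_sq (by positivity)]
  have hcard : (Fintype.card n : ℝ) * (δ / c) ≤ δ := by
    have h5 : (Fintype.card n : ℝ) ≤ c := by rw [hc]; linarith
    have h6 : 0 ≤ δ / c := by positivity
    calc (Fintype.card n : ℝ) * (δ / c) ≤ c * (δ / c) :=
          mul_le_mul_of_nonneg_right h5 h6
      _ = δ := by field_simp
  calc ∑ ω, p ω * traceNorm (Z ω) ≤ A.trace.re := hfinal1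
    _ ≤ (psqrt X).trace.re + (Fintype.card n) * Real.sqrt ε := hperturb
    _ ≤ (psqrt X).trace.re + δ := by rw [hsqrtε]; linarith
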